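/- Let G_r be the graph with vertex set {x_1,...,x_n} ∪ {s_{i,l} : 1 ≤ i ≤ n, 1 ≤ l ≤ r_i}, and edges making each set I_i = {x_i} ∪ {s_{i-1,l}}_l ∪ {s_{i,l}}_l a clique (for i = 1,...,n, with the convention that the s_0 block is empty). Then the elimination ordering s_{n,1}, x_n, s_{n-1,1},...,s_{n-1,r_{n-1}}, x_{n-1}, ..., s_{1,1},...,s_{1,r_1}, x_1 is a perfect elimination ordering, so G_r is chordal. -/

import Mathlib

/-- Vertices of the lifted correlative sparsity graph: `Sum.inl i` is the original
variable xᵢ, `Sum.inr (i, l)` is the lifting variable s_{i,l}. -/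
abbrev LVert : Type := ℕ ⊕ ℕ × ℕ

/-- The clique Iᵢ = {xᵢ} ∪ {s_{i-1,l}}ₗ ∪ {s_{i,l}}ₗ (the s₀ block is empty). -/
def Ibag (r : ℕ → ℕ) (i : ℕ) : Set LVert :=
  {v | match v with
    | Sum.inl j => j = i
    | Sum.inr (j, l) => 1 ≤ l ∧ l ≤ r j ∧ 1 ≤ j ∧ (j = i ∨ j + 1 = i)}

/-- The correlative sparsity graph G_r: the union of the cliques I₁,…,Iₙ. -/
def Gr (n : ℕ) (r : ℕ → ℕ) : SimpleGraph LVert where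
  Adj u v := u ≠ v ∧ ∃ i, 1 ≤ i ∧ i ≤ n ∧ u ∈ Ibag r i ∧ v ∈ Ibag r i
  symm := ⟨by
    rintro u v ⟨hne, i, h1, h2, hu, hv⟩
    exact ⟨hne.symm, i, h1, h2, hv, hu⟩⟩
  loopless := ⟨fun v h => h.1 rfl⟩

/-- ρ is a perfect elimination ordering for G: for each vertex, its neighbors
that come later in the ordering form a clique. -/
def IsPEO {V : Type*} (G : SimpleGraph V) (ρ : V → ℕ) : Prop :=
  ∀ u v w, G.Adj u v → G.Adj u w → ρ u < ρ v → ρ u < ρ w → v ≠ w → G.Adj v w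

/-- A graph is chordal: every cycle of length at least 4 has a chord, i.e. two
vertices of the cycle adjacent in the graph but not consecutive on the cycle. -/
def Chordal {V : Type*} (G : SimpleGraph V) : Prop :=
  ∀ (v : V) (c : G.Walk v v), c.IsCycle → 4 ≤ c.length →
    ∃ a b, a ∈ c.support ∧ b ∈ c.support ∧ G.Adj a b ∧ s(a, b) ∉ c.edges

/-- The elimination ordering s_{n,1}, xₙ, s_{n-1,1},…,s_{n-1,r_{n-1}}, x_{n-1}, …,
s_{1,1},…,s_{1,r₁}, x₁: vertices of column i are eliminated after all columns
j > i, states first, then xᵢ. -/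
def elimRank (n : ℕ) (r : ℕ → ℕ) : LVert → ℕ
  | Sum.inl i => (∑ j ∈ Finset.Ioc i n, (r j + 1)) + r i
  | Sum.inr (i, l) => (∑ j ∈ Finset.Ioc i n, (r j + 1)) + (l - 1)

/-- the given elimination ordering is a perfect elimination
ordering of G_r (and is injective on its vertices), hence G_r is chordal. -/
def S (n : ℕ) (r : ℕ → ℕ) (i : ℕ) : ℕ := ∑ j ∈ Finset.Ioc i n, (r j + 1)

lemma elim_inl (n r i) : elimRank n r (Sum.inl i) = S n r i + r i := rfl
lemma elim_inr (n r i l) : elimRank n r (Sum.inr (i, l)) = S n r i + (l - 1) := rfl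

lemma keyLt (n : ℕ) (r : ℕ → ℕ) {i j : ℕ} (hij : i < j) (hjn : j ≤ n) {p : ℕ}
    (hp : p ≤ r j) : S n r j + p < S n r i := by
  have hsplit : (∑ k ∈ Finset.Ioc i j, (r k + 1)) + S n r j = S n r i :=
    Finset.sum_Ioc_consecutive _ hij.le hjn
  have hj : j ∈ Finset.Ioc i j := by simp [hij]
  have hle : r j + 1 ≤ ∑ k ∈ Finset.Ioc i j, (r k + 1) :=
    Finset.single_le_sum (f := fun k => r k + 1) (fun k _ => Nat.zero_le _) hj
  omega

def col : LVert → ℕ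
  | Sum.inl i => i
  | Sum.inr (i, _) => i

lemma later (n : ℕ) (r : ℕ → ℕ) (u v : LVert) (j : ℕ) (hj1 : 1 ≤ j) (hjn : j ≤ n)
    (hu : u ∈ Ibag r j) (hv : v ∈ Ibag r j) (hlt : elimRank n r u < elimRank n r v) :
    1 ≤ col u ∧ col u ≤ n ∧ u ∈ Ibag r (col u) ∧ v ∈ Ibag r (col u) := by
  rcases u with iu | ⟨iu, l⟩
  · have h : iu = j := hu
    subst h
    exact ⟨hj1, hjn, rfl, hv⟩
  · obtain ⟨hl1, hl2, hiu1, hcase⟩ := hu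
    simp only [col]
    rcases hcase with rfl | hsucc
    · exact ⟨hiu1, hjn, ⟨hl1, hl2, hiu1, Or.inl rfl⟩, hv⟩
    · subst hsucc
      refine ⟨hiu1, by omega, ⟨hl1, hl2, hiu1, Or.inl rfl⟩, ?_⟩
      rcases v with jv | ⟨jv, m⟩
      · have h : jv = iu + 1 := hv
        subst h
        exfalso
        have h1 : S n r (iu + 1) + r (iu + 1) < S n r iu :=
          keyLt n r (by omega : iu < iu + 1) hjn le_rfl
        have h2 := elim_inr n r iu l
        have h3 := elim_inl n r (iu + 1)
        omega
      · obtain ⟨hm1, hm2, hjv1, hc⟩ := hv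
        rcases hc with rfl | h
        · exfalso
          have h1 : S n r (iu + 1) + (m - 1) < S n r iu :=
            keyLt n r (by omega : iu < iu + 1) hjn (by omega)
          have h2 := elim_inr n r iu l
          have h3 := elim_inr n r (iu + 1) m
          omega
        · have hj : jv = iu := by omega
          subst hj
          exact ⟨hm1, hm2, hjv1, Or.inl rfl⟩

lemma col_eq (n : ℕ) (r : ℕ → ℕ) {i j p q : ℕ} (hin : i ≤ n) (hjn : j ≤ n)
    (hp : p ≤ r i) (hq : q ≤ r j) (h : S n r i + p = S n r j + q) : i = j ∧ p = q := by
  rcases lt_trichotomy i j with h1 | h1 | h1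
  · have := keyLt n r h1 hjn hq
    omega
  · subst h1; omega
  · have := keyLt n r h1 hin hp
    omega

lemma peo_chordal {V : Type*} [DecidableEq V] {G : SimpleGraph V} {ρ : V → ℕ}
    (hpeo : IsPEO G ρ) (hinj : Set.InjOn ρ {v : V | ∃ w, G.Adj v w}) :
    Chordal G := by
  intro v c hc hlen
  obtain ⟨u, hu, hmin⟩ : ∃ u ∈ c.support.toFinset, ∀ x ∈ c.support.toFinset, ρ u ≤ ρ x :=
    Finset.exists_min_image _ ρ ⟨v, List.mem_toFinset.mpr c.start_mem_support⟩
  rw [List.mem_toFinset] at hu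
  have hmin' : ∀ x ∈ c.support, ρ u ≤ ρ x := fun x hx => hmin x (List.mem_toFinset.mpr hx)
  have hc' : (c.rotate u hu).IsCycle := hc.rotate hu
  have hrot := c.rotate_edges u hu
  have hlen' : (c.rotate u hu).length = c.length := by
    have h1 := hrot.perm.length_eq
    rwa [SimpleGraph.Walk.length_edges, SimpleGraph.Walk.length_edges] at h1
  have hsupp : ∀ x, x ∈ (c.rotate u hu).support → x ∈ c.support := by
    intro x hx
    rcases (SimpleGraph.Walk.mem_support_iff _).mp hx with rfl | hx'
    · exact hu
    · have hx2 : x ∈ c.support.tail := (c.support_rotate u hu).perm.mem_iff.mp hx'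
      exact (SimpleGraph.Walk.mem_support_iff _).mpr (Or.inr hx2)
  have hedge : ∀ e, e ∈ (c.rotate u hu).edges → e ∈ c.edges := fun e he => hrot.perm.mem_iff.mp he
  have hnil : ¬ (c.rotate u hu).Nil := by
    rw [SimpleGraph.Walk.nil_iff_length_eq]
    omega
  obtain ⟨b, hadj, q, hq⟩ := SimpleGraph.Walk.not_nil_iff.mp hnil
  have hccons : (q.cons hadj).IsCycle := hq ▸ hc'
  obtain ⟨hqp, hube⟩ := (SimpleGraph.Walk.cons_isCycle_iff q hadj).mp hccons
  have hql : 3 ≤ q.length := by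
    have := hq ▸ hlen'
    simp only [SimpleGraph.Walk.length_cons] at this
    omega
  have hqrnil : ¬ q.reverse.Nil := by
    rw [SimpleGraph.Walk.nil_iff_length_eq, SimpleGraph.Walk.length_reverse]
    omega
  obtain ⟨d, hadj2, q2, hq2⟩ := SimpleGraph.Walk.not_nil_iff.mp hqrnil
  have hq2p' : (q2.cons hadj2).IsPath := hq2 ▸ hqp.reverse
  obtain ⟨hq2p, hunotin⟩ := (SimpleGraph.Walk.cons_isPath_iff hadj2 q2).mp hq2p'
  have hq2l : 2 ≤ q2.length := by
    have h1 : q.reverse.length = q.length := SimpleGraph.Walk.length_reverse q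
    rw [hq2] at h1
    simp only [SimpleGraph.Walk.length_cons] at h1
    omega
  -- b ≠ d
  have hbd : b ≠ d := by
    intro h
    subst h
    have := (SimpleGraph.Walk.isPath_iff_eq_nil (p := q2)).mp hq2p
    rw [this] at hq2l
    simp at hq2l
  -- memberships
  have hb_sup : b ∈ c.support := by
    apply hsupp
    rw [hq]
    exact (SimpleGraph.Walk.mem_support_iff _).mpr (Or.inr (by simp [q.start_mem_support]))
  have hd_sup : d ∈ c.support := by
    apply hsupp
    rw [hq]
    have hd_q : d ∈ q.support := by
      have : d ∈ q.reverse.support := by rw [hq2]; simp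
      rwa [SimpleGraph.Walk.support_reverse, List.mem_reverse] at this
    exact (SimpleGraph.Walk.mem_support_iff _).mpr (Or.inr (by simp [hd_q]))
  -- rank facts
  have hub : ρ u < ρ b := by
    have h1 : ρ u ≤ ρ b := hmin' b hb_sup
    have h2 : ρ u ≠ ρ b := fun h => hadj.ne (hinj ⟨b, hadj⟩ ⟨u, hadj.symm⟩ h)
    omega
  have hud : ρ u < ρ d := by
    have h1 : ρ u ≤ ρ d := hmin' d hd_sup
    have h2 : ρ u ≠ ρ d := fun h => hadj2.ne (hinj ⟨d, hadj2⟩ ⟨u, hadj2.symm⟩ h)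
    omega
  have habd : G.Adj b d := hpeo u b d hadj hadj2 hub hud hbd
  -- chord not an edge of the cycle
  have hbu : b ≠ u := hadj.ne'
  have hdu : d ≠ u := hadj2.ne'
  have hnq2 : s(b, d) ∉ q2.edges := by
    intro he
    have hd2 : d ∈ q2.support := q2.snd_mem_support_of_mem_edges he
    -- decompose q2
    have hq2nil : ¬ q2.Nil := by
      rw [SimpleGraph.Walk.nil_iff_length_eq]; omega
    obtain ⟨x, hadj3, q3, hq3⟩ := SimpleGraph.Walk.not_nil_iff.mp hq2nil
    have hq3p' : (q3.cons hadj3).IsPath := hq3 ▸ hq2p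
    obtain ⟨hq3p, hdnotin⟩ := (SimpleGraph.Walk.cons_isPath_iff hadj3 q3).mp hq3p'
    rw [hq3] at he
    simp only [SimpleGraph.Walk.edges_cons, List.mem_cons] at he
    rcases he with he | he
    · rw [Sym2.eq_iff] at he
      rcases he with ⟨h1, h2⟩ | ⟨h1, h2⟩
      · exact hbd h1
      · -- b = x, d = d
        subst h1
        have := (SimpleGraph.Walk.isPath_iff_eq_nil (p := q3)).mp hq3p
        rw [hq3, this] at hq2l
        simp at hq2l
    · exact hdnotin (q3.snd_mem_support_of_mem_edges he)
  have hnotin : s(b, d) ∉ (c.rotate u hu).edges := by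
    rw [hq]
    simp only [SimpleGraph.Walk.edges_cons, List.mem_cons]
    rintro (he | he)
    · rw [Sym2.eq_iff] at he
      rcases he with ⟨h1, h2⟩ | ⟨h1, h2⟩
      · exact hbu h1
      · exact hdu h2
    · have : s(b, d) ∈ q.reverse.edges := by
        rw [SimpleGraph.Walk.edges_reverse, List.mem_reverse]; exact he
      rw [hq2] at this
      simp only [SimpleGraph.Walk.edges_cons, List.mem_cons] at this
      rcases this with he' | he'
      · rw [Sym2.eq_iff] at he'
        rcases he' with ⟨h1, h2⟩ | ⟨h1, h2⟩
        · exact hbu h1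
        · exact hbd h1
      · exact hnq2 he'
  exact ⟨b, d, hb_sup, hd_sup, habd, fun h => hnotin (hrot.perm.mem_iff.mpr h)⟩

lemma inj_main (n : ℕ) (r : ℕ → ℕ) :
    Set.InjOn (elimRank n r) {v | ∃ i, 1 ≤ i ∧ i ≤ n ∧ v ∈ Ibag r i} := by
  rintro v ⟨i, hi1, hin, hvi⟩ w ⟨j, hj1, hjn, hwj⟩ heq
  rcases v with a | ⟨a, l⟩ <;> rcases w with b | ⟨b, m⟩
  · have ha : a = i := hvi
    have hb : b = j := hwj
    rw [elim_inl, elim_inl] at heq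
    obtain ⟨h1, h2⟩ := col_eq n r (by omega) (by omega) le_rfl le_rfl heq
    rw [h1]
  · have ha : a = i := hvi
    obtain ⟨hm1, hm2, hb1, hbc⟩ := hwj
    have hbn : b ≤ n := by omega
    rw [elim_inl, elim_inr] at heq
    obtain ⟨h1, h2⟩ := col_eq n r (by omega) hbn le_rfl (by omega) heq
    subst h1
    omega
  · obtain ⟨hl1, hl2, ha1, hac⟩ := hvi
    have hb : b = j := hwj
    have han : a ≤ n := by omega
    rw [elim_inr, elim_inl] at heq
    obtain ⟨h1, h2⟩ := col_eq n r han (by omega) (by omega) le_rfl heq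
    subst h1
    omega
  · obtain ⟨hl1, hl2, ha1, hac⟩ := hvi
    obtain ⟨hm1, hm2, hb1, hbc⟩ := hwj
    have han : a ≤ n := by omega
    have hbn : b ≤ n := by omega
    rw [elim_inr, elim_inr] at heq
    obtain ⟨h1, h2⟩ := col_eq n r han hbn (by omega) (by omega) heq
    subst h1
    have : l = m := by omega
    rw [this]


theorem stmt_12 (n : ℕ) (r : ℕ → ℕ) (hrn : r n = 1)
    (hr : ∀ i, 1 ≤ i → i ≤ n → 1 ≤ r i) :
    IsPEO (Gr n r) (elimRank n r) ∧
    Set.InjOn (elimRank n r) {v | ∃ i, 1 ≤ i ∧ i ≤ n ∧ v ∈ Ibag r i} ∧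
    Chordal (Gr n r) := by
  have hpeo : IsPEO (Gr n r) (elimRank n r) := by
    rintro u v w ⟨huv, j, hj1, hjn, huj, hvj⟩ ⟨huw, j', hj1', hjn', huj', hwj'⟩ hv hw hvw
    obtain ⟨h1, h2, hu', hv'⟩ := later n r u v j hj1 hjn huj hvj hv
    obtain ⟨_, _, _, hw'⟩ := later n r u w j' hj1' hjn' huj' hwj' hw
    exact ⟨hvw, col u, h1, h2, hv', hw'⟩
  refine ⟨hpeo, inj_main n r, ?_⟩
  apply peo_chordal hpeo
  apply (inj_main n r).mono
  rintro v ⟨w, hne, i, h1, h2, hv, _⟩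
  exact ⟨i, h1, h2, hv⟩
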